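/- Suppose the topological space X admits a probability measure μ defined on (at least) the Borel sets such that μ(U) > 0 for every nonempty open U and μ(G) = 1 for every dense open G. Then X has the small transversal property: for every sequence ⟨F_n⟩_{n<ω} of funnels in X (each F_n = ⟨U_{n,k}⟩_{k<ω} a decreasing sequence of open sets whose intersection is nowhere dense) there exists g : ω → ω such that ⋃_{n<ω} U_{n,g(n)} is not dense in X. -/

import Mathlib

open MeasureTheory

/-- If `X` carries a Borel probability measure that is positive on nonempty open sets
and full on dense open sets, then `X` has the small transversal property. -/
theorem stmt16 {X : Type*} [TopologicalSpace X] [MeasurableSpace X] [BorelSpace X]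
    (μ : Measure X) [IsProbabilityMeasure μ]
    (hpos : ∀ U : Set X, IsOpen U → U.Nonempty → 0 < μ U)
    (hfull : ∀ G : Set X, IsOpen G → Dense G → μ G = 1)
    (U : ℕ → ℕ → Set X)
    (hopen : ∀ n k, IsOpen (U n k))
    (hdec : ∀ n, Antitone (U n))
    (hnwd : ∀ n, IsNowhereDense (⋂ k, U n k)) :
    ∃ g : ℕ → ℕ, ¬ Dense (⋃ n, U n (g n)) := by
  -- The intersection of each funnel has measure 0.
  have hzero : ∀ n, μ (⋂ k, U n k) = 0 := by
    intro n
    have hC : interior (closure (⋂ k, U n k)) = ∅ := hnwd n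
    have hdense : Dense (closure (⋂ k, U n k))ᶜ :=
      interior_eq_empty_iff_dense_compl.mp hC
    have hμc : μ (closure (⋂ k, U n k))ᶜ = 1 :=
      hfull _ isClosed_closure.isOpen_compl hdense
    have hcl : μ (closure (⋂ k, U n k)) = 0 := by
      have hadd := measure_add_measure_compl
        (μ := μ) (isClosed_closure (s := ⋂ k, U n k)).measurableSet
      rw [hμc, measure_univ] at hadd
      have : μ (closure (⋂ k, U n k)) + 1 = 0 + 1 := by simpa using hadd
      exact WithTop.add_right_cancel ENNReal.one_ne_top this
    exact measure_mono_null (subset_closure) hcl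
  -- Measure continuity from above: μ (U n k) → 0.
  have htend : ∀ n, Filter.Tendsto (fun k => μ (U n k)) Filter.atTop (nhds 0) := by
    intro n
    have := tendsto_measure_iInter_atTop (μ := μ)
      (fun k => (hopen n k).nullMeasurableSet) (hdec n) ⟨0, measure_ne_top μ _⟩
    rwa [hzero n] at this
  -- Pick g n with μ (U n (g n)) ≤ 2⁻¹ ^ (n+2).
  have hek : ∀ n, ∃ k, μ (U n k) ≤ (2 : ENNReal)⁻¹ ^ (n + 2) := by
    intro n
    have hpos' : (0 : ENNReal) < 2⁻¹ ^ (n + 2) := by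
      simp [pos_iff_ne_zero, pow_ne_zero]
    have := (htend n).eventually_le_const hpos'
    exact this.exists
  choose g hg using hek
  refine ⟨g, fun hdense => ?_⟩
  have hO : IsOpen (⋃ n, U n (g n)) := isOpen_iUnion fun n => hopen n (g n)
  have h1 : μ (⋃ n, U n (g n)) = 1 := hfull _ hO hdense
  have hsum : μ (⋃ n, U n (g n)) ≤ ∑' n, (2 : ENNReal)⁻¹ ^ (n + 2) :=
    (measure_iUnion_le _).trans (ENNReal.tsum_le_tsum hg)
  have hgeom : (∑' n : ℕ, (2 : ENNReal)⁻¹ ^ (n + 2)) = 2⁻¹ := by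
    have : (∑' n : ℕ, (2 : ENNReal)⁻¹ ^ (n + 2))
        = (2 : ENNReal)⁻¹ ^ 2 * ∑' n : ℕ, (2 : ENNReal)⁻¹ ^ n := by
      rw [ENNReal.tsum_mul_left.symm]
      congr 1 with n
      ring
    rw [this, ENNReal.tsum_geometric, ENNReal.one_sub_inv_two, inv_inv, sq, mul_assoc,
      ENNReal.inv_mul_cancel two_ne_zero ENNReal.ofNat_ne_top, mul_one]
  rw [h1, hgeom] at hsum
  norm_num at hsum
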